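/- Let I be a finite set, → a reflexive transitive relation on I, and for each i ∈ I let ρ_i ⊆ ℝ^d. Suppose →' is a sub-relation of → with the interpolation property: whenever i → k, there is a →'-path i = i₁ →' i₂ →' ⋯ →' i_m = k. Then ⋃_{paths p in (I,→)} conv(⋃_{i∈p} ρ_i) = ⋃_{paths p in (I,→')} conv(⋃_{i∈p} ρ_i), where a path in a relation is a finite sequence i₁, …, i_ℓ with consecutive terms related (ℓ = 1 allowed). -/
import Mathlib


/-- The union, over all finite paths of the relation `s` on `I`, of the convex hulls of the
unions of the sets `ρ i` visited by the path. -/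
def pathHullUnion {I : Type*} {E : Type*} [AddCommGroup E] [Module ℝ E]
    (s : I → I → Prop) (ρ : I → Set E) : Set E :=
  {x | ∃ (ℓ : ℕ) (p : ℕ → I), 1 ≤ ℓ ∧ (∀ k, k + 1 < ℓ → s (p k) (p (k + 1))) ∧
    x ∈ convexHull ℝ (⋃ k ∈ Finset.range ℓ, ρ (p k))}

theorem stmt11 {I : Type*} [Fintype I] {E : Type*} [NormedAddCommGroup E] [NormedSpace ℝ E]
    (r r' : I → I → Prop) (hrefl : ∀ i, r i i)
    (htrans : ∀ i j k, r i j → r j k → r i k)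
    (hsub : ∀ i j, r' i j → r i j)
    (hinterp : ∀ i k, r i k → ∃ (m : ℕ) (q : ℕ → I), 1 ≤ m ∧ q 0 = i ∧ q (m - 1) = k ∧
      ∀ j, j + 1 < m → r' (q j) (q (j + 1)))
    (ρ : I → Set E) :
    pathHullUnion r ρ = pathHullUnion r' ρ := by
  have cover : ∀ (p q : ℕ → I) (ℓ m : ℕ), (∀ k < ℓ, ∃ j < m, q j = p k) →
      (⋃ k ∈ Finset.range ℓ, ρ (p k)) ⊆ ⋃ j ∈ Finset.range m, ρ (q j) := by
    intro p q ℓ m h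
    refine Set.iUnion₂_subset fun k hk => ?_
    obtain ⟨j, hj, hqj⟩ := h k (Finset.mem_range.mp hk)
    exact Set.subset_iUnion₂_of_subset j (Finset.mem_range.mpr hj) (by rw [hqj])
  ext x
  constructor
  · rintro ⟨ℓ, p, hℓ, hp, hx⟩
    have key : ∀ ℓ (p : ℕ → I), 1 ≤ ℓ → (∀ k, k + 1 < ℓ → r (p k) (p (k + 1))) →
        ∃ (m : ℕ) (q : ℕ → I), 1 ≤ m ∧ (∀ j, j + 1 < m → r' (q j) (q (j + 1))) ∧ q (m - 1) = p (ℓ - 1) ∧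
          ∀ k < ℓ, ∃ j < m, q j = p k := by
      intro ℓ
      induction ℓ with
      | zero => intro p h; omega
      | succ n ih =>
        intro p _ hp
        rcases Nat.eq_zero_or_pos n with hn | hn
        · subst hn
          exact ⟨1, p, le_refl 1, fun j hj => by omega, rfl, fun k hk => ⟨k, hk, rfl⟩⟩
        · obtain ⟨m, q, hm, hq, hend, hcov⟩ := ih p hn (fun k hk => hp k (by omega))
          have hedge : r (p (n - 1)) (p n) := by
            have h1 : n - 1 + 1 = n := by omega
            have h2 := hp (n - 1) (by omega)
            rwa [h1] at h2
          obtain ⟨s, t, hs, ht0, hts, ht⟩ := hinterp _ _ hedge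
          refine ⟨m + s - 1, fun j => if j < m then q j else t (j - m + 1), by omega,
            ?_, ?_, ?_⟩
          · intro j hj
            beta_reduce
            by_cases h1 : j + 1 < m
            · simp only [if_pos (show j < m by omega), if_pos h1]
              exact hq j h1
            · by_cases h2 : j + 1 = m
              · rw [if_pos (show j < m by omega), if_neg (show ¬ j + 1 < m by omega)]
                have hqt : q j = t 0 := by
                  rw [show j = m - 1 by omega, hend, ← ht0]
                rw [hqt, show j + 1 - m + 1 = 1 by omega]
                exact ht 0 (by omega)
              · rw [if_neg (show ¬ j < m by omega), if_neg (show ¬ j + 1 < m by omega)]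
                rw [show j + 1 - m + 1 = (j - m + 1) + 1 by omega]
                exact ht _ (by omega)
          · beta_reduce
            by_cases hsm : m + s - 1 - 1 < m
            · have hs1 : s = 1 := by omega
              have ht1 : t 0 = p n := by
                have := hts; rw [hs1] at this; exact this
              rw [if_pos hsm, show m + s - 1 - 1 = m - 1 by omega, hend, ← ht0, ht1]
              rfl
            · rw [if_neg hsm, show m + s - 1 - 1 - m + 1 = s - 1 by omega]
              exact hts
          · intro k hk
            by_cases hkn : k < n
            · obtain ⟨j, hj, hqj⟩ := hcov k hkn
              exact ⟨j, by omega, by beta_reduce; rw [if_pos hj]; exact hqj⟩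
            · have hkeq : k = n := by omega
              subst hkeq
              by_cases hsm : m + s - 2 < m
              · have hs1 : s = 1 := by omega
                have ht1 : t 0 = p k := by
                  have := hts; rw [hs1] at this; exact this
                refine ⟨m - 1, by omega, ?_⟩
                beta_reduce
                rw [if_pos (show m - 1 < m by omega), hend, ← ht0, ht1]
              · refine ⟨m + s - 2, by omega, ?_⟩
                beta_reduce
                rw [if_neg hsm, show m + s - 2 - m + 1 = s - 1 by omega]
                exact hts
    obtain ⟨m, q, hm, hq, _, hcov⟩ := key ℓ p hℓ hp
    exact ⟨m, q, hm, hq, convexHull_mono (cover p q ℓ m hcov) hx⟩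
  · rintro ⟨ℓ, p, hℓ, hp, hx⟩
    exact ⟨ℓ, p, hℓ, fun k hk => hsub _ _ (hp k hk), hx⟩
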